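/- Suppose a space X contains a sequence {D_n} of pairwise disjoint nonempty clopen sets whose union U is not closed, and there is a point x in the boundary of U each of whose neighbourhoods meets all but finitely many D_n. Then C(X) is not rr-good; in particular, the one-point compactification of ℕ is not rr-good. -/

import Mathlib

def IsRRGood (R : Type*) [Mul R] : Prop :=
  ∀ r s : R, ∃ h : R, h * h = h * r ∧ h * h = h * s ∧
    ∀ k : R, k * k = k * r → k * k = k * s → k * k = k * h

open Set

open scoped Classical in
/-- An auxiliary function: value `(n+1)⁻¹` on `D (2n+1)`, `0` elsewhere. -/
noncomputable def tAux {X : Type} (D : ℕ → Set X) (y : X) : ℝ :=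
  if h : ∃ n, y ∈ D (2 * n + 1) then ((Nat.find h : ℝ) + 1)⁻¹ else 0

lemma tAux_eq_of_mem {X : Type} {D : ℕ → Set X}
    (hdisj : Pairwise fun m n => Disjoint (D m) (D n)) {y : X} {n : ℕ}
    (hy : y ∈ D (2 * n + 1)) : tAux D y = ((n : ℝ) + 1)⁻¹ := by
  classical
  have hex : ∃ m, y ∈ D (2 * m + 1) := ⟨n, hy⟩
  rw [tAux, dif_pos hex]
  have hfind := Nat.find_spec hex
  have heq : Nat.find hex = n := by
    by_contra hne
    have hidx : (2 * Nat.find hex + 1) ≠ (2 * n + 1) := by omega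
    exact Set.disjoint_left.mp (hdisj hidx) hfind hy
  rw [heq]

lemma tAux_eq_zero {X : Type} {D : ℕ → Set X} {y : X}
    (hy : ∀ n, y ∉ D (2 * n + 1)) : tAux D y = 0 := by
  classical
  rw [tAux, dif_neg]
  push_neg
  exact hy

lemma continuous_tAux {X : Type} [TopologicalSpace X] {D : ℕ → Set X}
    (hcl : ∀ n, IsClopen (D n))
    (hdisj : Pairwise fun m n => Disjoint (D m) (D n)) :
    Continuous (tAux D) := by
  rw [continuous_iff_continuousAt]
  intro y
  by_cases hy : ∃ n, y ∈ D (2 * n + 1)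
  · obtain ⟨n, hn⟩ := hy
    have hev : (fun _ : X => tAux D y) =ᶠ[nhds y] tAux D := by
      filter_upwards [(hcl (2 * n + 1)).2.mem_nhds hn] with z hz
      rw [tAux_eq_of_mem hdisj hz, tAux_eq_of_mem hdisj hn]
    exact continuousAt_const.congr hev
  · push_neg at hy
    have hy0 : tAux D y = 0 := tAux_eq_zero hy
    rw [ContinuousAt, hy0, Metric.tendsto_nhds]
    intro ε hε
    obtain ⟨K, hK⟩ : ∃ K : ℕ, ε⁻¹ < (K : ℝ) := exists_nat_gt ε⁻¹
    have hKε : ((K : ℝ) + 1)⁻¹ < ε := by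
      rw [inv_lt_comm₀ (by positivity) hε]
      linarith
    have hVopen : IsOpen (⋃ n ∈ Finset.range (K + 1), D (2 * n + 1))ᶜ := by
      rw [isOpen_compl_iff]
      exact (Finset.range (K + 1)).finite_toSet.isClosed_biUnion
        fun n _ => (hcl (2 * n + 1)).1
    have hyV : y ∈ (⋃ n ∈ Finset.range (K + 1), D (2 * n + 1))ᶜ := by
      simp only [mem_compl_iff, mem_iUnion]
      rintro ⟨n, -, hn⟩
      exact hy n hn
    filter_upwards [hVopen.mem_nhds hyV] with z hz
    rw [Real.dist_eq, sub_zero]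
    by_cases hz' : ∃ n, z ∈ D (2 * n + 1)
    · obtain ⟨m, hm⟩ := hz'
      rw [tAux_eq_of_mem hdisj hm]
      have hmK : K + 1 ≤ m := by
        by_contra hlt
        push_neg at hlt
        exact hz (mem_iUnion.mpr ⟨m, mem_iUnion.mpr ⟨Finset.mem_range.mpr hlt, hm⟩⟩)
      have h1 : ((m : ℝ) + 1)⁻¹ ≤ ((K : ℝ) + 1)⁻¹ := by
        apply inv_anti₀ (by positivity)
        have : (K : ℝ) + 1 ≤ (m : ℝ) := by exact_mod_cast hmK
        linarith
      rw [abs_of_nonneg (by positivity)]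
      linarith
    · push_neg at hz'
      rw [tAux_eq_zero hz', abs_zero]
      exact hε

/-- If `X` contains a sequence of pairwise disjoint nonempty clopen sets whose union
is not closed and there is a boundary point of the union each of whose neighbourhoods
meets all but finitely many of the sets, then `C(X)` is not rr-good; in particular the
one-point compactification of `ℕ` is not rr-good. -/
theorem not_rrGood_of_clopen_sequence :
    (∀ (X : Type) [TopologicalSpace X] (D : ℕ → Set X),
      (∀ n, IsClopen (D n)) → (∀ n, (D n).Nonempty) →
      (Pairwise fun m n => Disjoint (D m) (D n)) →
      ¬ IsClosed (⋃ n, D n) →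
      (∃ x ∈ frontier (⋃ n, D n),
        ∀ N ∈ nhds x, {n : ℕ | N ∩ D n = ∅}.Finite) →
      ¬ IsRRGood C(X, ℝ)) ∧
    ¬ IsRRGood C(OnePoint ℕ, ℝ) := by
  classical
  have main : ∀ (X : Type) [TopologicalSpace X] (D : ℕ → Set X),
      (∀ n, IsClopen (D n)) → (∀ n, (D n).Nonempty) →
      (Pairwise fun m n => Disjoint (D m) (D n)) →
      ¬ IsClosed (⋃ n, D n) →
      (∃ x ∈ frontier (⋃ n, D n),
        ∀ N ∈ nhds x, {n : ℕ | N ∩ D n = ∅}.Finite) →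
      ¬ IsRRGood C(X, ℝ) := by
    intro X _ D hcl hne hdisj _ hx hgood
    obtain ⟨x, -, hxN⟩ := hx
    set t : C(X, ℝ) := ⟨tAux D, continuous_tAux hcl hdisj⟩ with ht
    obtain ⟨h, h1, h2, hmax⟩ := hgood 1 (1 + t)
    rw [mul_one] at h1
    rw [h1, mul_add, mul_one, left_eq_add] at h2
    -- h vanishes on the odd-indexed sets
    have hodd : ∀ n, ∀ y ∈ D (2 * n + 1), h y = 0 := by
      intro n y hy
      have := congrArg (fun f : C(X, ℝ) => f y) h2
      simp only [ContinuousMap.mul_apply, ContinuousMap.zero_apply] at this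
      have hty : t y = ((n : ℝ) + 1)⁻¹ := tAux_eq_of_mem hdisj hy
      rw [hty] at this
      have hpos : ((n : ℝ) + 1)⁻¹ ≠ 0 := by positivity
      exact (mul_eq_zero.mp this).resolve_right hpos
    -- h is 1 on the even-indexed sets
    have heven : ∀ n, ∀ y ∈ D (2 * n), h y = 1 := by
      intro n y hy
      set k : C(X, ℝ) := ⟨fun z => if z ∈ D (2 * n) then 1 else 0, by
        apply continuous_if
        · intro a ha
          simp only [Set.setOf_mem_eq, (hcl (2 * n)).frontier_eq] at ha
          exact absurd ha (notMem_empty a)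
        · exact continuous_const.continuousOn
        · exact continuous_const.continuousOn⟩ with hk
      have hk1 : k * k = k * 1 := by
        ext z
        simp only [ContinuousMap.mul_apply, ContinuousMap.one_apply, mul_one, hk,
          ContinuousMap.coe_mk]
        by_cases hz : z ∈ D (2 * n) <;> simp [hz]
      have hk2 : k * k = k * (1 + t) := by
        ext z
        simp only [ContinuousMap.mul_apply, ContinuousMap.add_apply,
          ContinuousMap.one_apply, hk, ContinuousMap.coe_mk]
        by_cases hz : z ∈ D (2 * n)
        · have htz : t z = 0 := by
            apply tAux_eq_zero
            intro m hm
            exact Set.disjoint_left.mp (hdisj (show 2 * n ≠ 2 * m + 1 by omega)) hz hm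
          simp [hz, htz]
        · simp [hz]
      have hkh := hmax k hk1 hk2
      have := congrArg (fun f : C(X, ℝ) => f y) hkh
      simp only [ContinuousMap.mul_apply, hk, ContinuousMap.coe_mk, if_pos hy] at this
      simpa using this.symm
    -- contradiction at the boundary point x
    by_cases hhx : (1 : ℝ) / 2 < h x
    · -- neighbourhood where h > 0, but h = 0 on odd sets
      have hN : {y | 0 < h y} ∈ nhds x := by
        have : IsOpen {y | 0 < h y} := isOpen_lt continuous_const h.continuous
        exact this.mem_nhds (by simp only [mem_setOf_eq]; linarith)
      have hfin := hxN _ hN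
      have hinj : Function.Injective (fun n : ℕ => 2 * n + 1) := by
        intro a b hab
        change 2 * a + 1 = 2 * b + 1 at hab
        omega
      obtain ⟨m, hm⟩ := (hfin.preimage hinj.injOn).infinite_compl.nonempty
      simp only [mem_compl_iff, mem_preimage, mem_setOf_eq] at hm
      obtain ⟨y, hy1, hy2⟩ := nonempty_iff_ne_empty.mpr hm
      have := hodd m y hy2
      simp only [mem_setOf_eq] at hy1
      linarith
    · -- neighbourhood where h < 1, but h = 1 on even sets
      push_neg at hhx
      have hN : {y | h y < 1} ∈ nhds x := by
        have : IsOpen {y | h y < 1} := isOpen_lt h.continuous continuous_const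
        exact this.mem_nhds (by simp only [mem_setOf_eq]; linarith)
      have hfin := hxN _ hN
      have hinj : Function.Injective (fun n : ℕ => 2 * n) := by
        intro a b hab
        change 2 * a = 2 * b at hab
        omega
      obtain ⟨m, hm⟩ := (hfin.preimage hinj.injOn).infinite_compl.nonempty
      simp only [mem_compl_iff, mem_preimage, mem_setOf_eq] at hm
      obtain ⟨y, hy1, hy2⟩ := nonempty_iff_ne_empty.mpr hm
      have := heven m y hy2
      simp only [mem_setOf_eq] at hy1
      linarith
  refine ⟨main, ?_⟩
  -- instantiate with the one-point compactification of ℕ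
  set D : ℕ → Set (OnePoint ℕ) := fun n => {(n : OnePoint ℕ)} with hD
  have hU : (⋃ n, D n) = Set.range ((↑) : ℕ → OnePoint ℕ) :=
    Set.iUnion_singleton_eq_range _
  have hclopen : ∀ n, IsClopen (D n) := by
    intro n
    refine ⟨isClosed_singleton, ?_⟩
    have himg : IsOpen (((↑) : ℕ → OnePoint ℕ) '' {n}) :=
      OnePoint.isOpen_image_coe.mpr (isOpen_discrete _)
    simpa [hD] using himg
  have hnone : ∀ n, (D n).Nonempty := fun n => ⟨n, rfl⟩
  have hdisj : Pairwise fun m n => Disjoint (D m) (D n) := by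
    intro m n hmn
    simp only [hD, Set.disjoint_singleton]
    exact fun hc => hmn (OnePoint.coe_injective hc)
  have hnotclosed : ¬ IsClosed (⋃ n, D n) := by
    rw [hU]
    intro hclosed
    have hopen : IsOpen ((Set.range ((↑) : ℕ → OnePoint ℕ))ᶜ) := hclosed.isOpen_compl
    rw [OnePoint.compl_range_coe] at hopen
    rw [OnePoint.isOpen_iff_of_mem' (Set.mem_singleton _)] at hopen
    have hpre : ((↑) ⁻¹' ({OnePoint.infty} : Set (OnePoint ℕ)) : Set ℕ) = ∅ := by
      ext n
      simp [OnePoint.coe_ne_infty]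
    rw [hpre, compl_empty] at hopen
    have := hopen.1.finite IsDiscrete.univ
    exact Set.infinite_univ this
  refine main (OnePoint ℕ) D hclopen hnone hdisj hnotclosed ⟨OnePoint.infty, ?_, ?_⟩
  · rw [hU, frontier, (OnePoint.isOpen_range_coe (X := ℕ)).interior_eq]
    constructor
    · rw [(OnePoint.denseRange_coe (X := ℕ)).closure_range]
      exact mem_univ _
    · exact OnePoint.infty_notMem_range_coe
  · intro N hN
    obtain ⟨O, hON, hOopen, hOmem⟩ := mem_nhds_iff.mp hN
    have hcpt := ((OnePoint.isOpen_iff_of_mem' hOmem).mp hOopen).1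
    have hfin : (((↑) ⁻¹' O : Set ℕ)ᶜ).Finite := hcpt.finite (IsDiscrete.univ.mono (subset_univ _))
    apply hfin.subset
    intro n hn
    simp only [mem_setOf_eq, hD, Set.inter_singleton_eq_empty] at hn
    simp only [mem_compl_iff, mem_preimage]
    exact fun hc => hn (hON hc)
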